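/- Let T be a rooted tree with the cut-off property, and let T'' be obtained from T by attaching at most one new leaf to each of a set of chosen vertices, where each chosen vertex is a leaf of T whose parent's subtree sizes still satisfy the cut-off condition after the additions (specifically: each chosen vertex currently roots a subtree of size 1 and attaching one leaf makes it size 2 ≤ 2^{i'} for the relevant i' at its parent). Then T'' also has the cut-off property, and hence a_t(T'') = 1. -/

import Mathlib

open Finset

/-- A total acquisition move in graph `G`. -/
def AcqMove {V : Type*} [DecidableEq V] (G : SimpleGraph V) (w w' : V → ℕ) : Prop :=
  ∃ u v, G.Adj u v ∧ 0 < w u ∧ w u ≤ w v ∧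
    w' = Function.update (Function.update w u 0) v (w v + w u)

/-- Reachability by acquisition moves. -/
def AcqReach {V : Type*} [DecidableEq V] (G : SimpleGraph V) : (V → ℕ) → (V → ℕ) → Prop :=
  Relation.ReflTransGen (AcqMove G)

/-- No legal acquisition move remains. -/
def AcqMaximal {V : Type*} [DecidableEq V] (G : SimpleGraph V) (w : V → ℕ) : Prop :=
  ¬ ∃ w', AcqMove G w w'

/-- The size of the residual set. -/
noncomputable def residualCard {V : Type*} (w : V → ℕ) : ℕ :=
  Nat.card {v : V // 0 < w v}

/-- The total acquisition number of `G`. -/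
noncomputable def atNum {V : Type*} [DecidableEq V] (G : SimpleGraph V) : ℕ :=
  sInf { k | ∃ w, AcqReach G (fun _ => 1) w ∧ AcqMaximal G w ∧ residualCard w = k }

/-- A finite rooted tree given by a parent function. -/
structure RTree (V : Type*) where
  parent : V → V
  root : V
  root_fixed : parent root = root
  reach : ∀ v, ∃ n, parent^[n] v = root

open scoped Classical in
/-- The subtree (set of descendants, including `v`) rooted at `v`. -/
noncomputable def RTree.subtree {V : Type*} [Fintype V] (T : RTree V) (v : V) :
    Finset V :=
  Finset.univ.filter fun u => ∃ n, T.parent^[n] u = v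

/-- `u` is a child of `v`. -/
def RTree.isChild {V : Type*} (T : RTree V) (u v : V) : Prop :=
  u ≠ T.root ∧ T.parent u = v

/-- `l` is a leaf: it has no children. -/
def RTree.IsLeaf {V : Type*} (T : RTree V) (l : V) : Prop :=
  ¬ ∃ u, T.isChild u l

/-- The underlying (undirected) graph of a rooted tree. -/
def RTree.graph {V : Type*} (T : RTree V) : SimpleGraph V :=
  SimpleGraph.fromRel fun u v => u ≠ T.root ∧ T.parent u = v

/-- The cut-off property (0-based indices): for each vertex `v`, its children can be
enumerated so that, for some `i'`, the subtree at the `idx`-th child has exactly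
`2^idx` vertices for `idx < i'` and at most `2^{i'}` vertices for `idx ≥ i'`. -/
def RTree.CutOff {V : Type*} [Fintype V] (T : RTree V) : Prop :=
  ∀ v : V, ∃ l : List V, l.Nodup ∧ (∀ u, u ∈ l ↔ T.isChild u v) ∧
    ∃ i' : ℕ,
      (∀ (i : ℕ) (h : i < l.length), i < i' → (T.subtree l[i]).card = 2 ^ i) ∧
      (∀ (i : ℕ) (h : i < l.length), i' ≤ i → (T.subtree l[i]).card ≤ 2 ^ i')


section helpers
variable {V : Type*} [Fintype V] (T : RTree V)

lemma mem_subtree_iff {u v : V} : u ∈ T.subtree v ↔ ∃ n, T.parent^[n] u = v := by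
  classical
  simp [RTree.subtree]

lemma self_mem_subtree (v : V) : v ∈ T.subtree v :=
  (mem_subtree_iff T).2 ⟨0, rfl⟩

lemma iterate_root (n : ℕ) : T.parent^[n] T.root = T.root :=
  Function.iterate_fixed T.root_fixed n

lemma cycle_root {v : V} {k : ℕ} (hk : 0 < k) (h : T.parent^[k] v = v) : v = T.root := by
  obtain ⟨n, hn⟩ := T.reach v
  have key : ∀ m, T.parent^[k * m] v = v := by
    intro m
    induction m with
    | zero => simp
    | succ m ih =>
        have : k * (m + 1) = k * m + k := by ring
        rw [this, Function.iterate_add_apply, h, ih]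
  have hkn : n ≤ k * n := Nat.le_mul_of_pos_left n hk
  have : T.parent^[k * n] v = T.root := by
    have : k * n = (k * n - n) + n := by omega
    rw [this, Function.iterate_add_apply, hn, iterate_root]
  rw [key n] at this
  exact this

lemma subtree_subset_of_child {u v : V} (h : T.isChild u v) :
    T.subtree u ⊆ T.subtree v := by
  intro x hx
  obtain ⟨n, hn⟩ := (mem_subtree_iff T).1 hx
  exact (mem_subtree_iff T).2 ⟨n + 1, by rw [Function.iterate_succ_apply', hn, h.2]⟩

lemma parent_not_mem_subtree {u v : V} (h : T.isChild u v) : v ∉ T.subtree u := by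
  intro hv
  obtain ⟨n, hn⟩ := (mem_subtree_iff T).1 hv
  have : T.parent^[n + 1] v = v := by rw [Function.iterate_succ_apply', hn, h.2]
  have hroot := cycle_root T (Nat.succ_pos n) this
  rw [hroot, iterate_root] at hn
  exact h.1 hn.symm

lemma child_ne {u v : V} (h : T.isChild u v) : u ≠ v := by
  intro he
  exact parent_not_mem_subtree T h (he ▸ self_mem_subtree T u)

lemma subtree_card_lt {u v : V} (h : T.isChild u v) :
    (T.subtree u).card < (T.subtree v).card := by
  apply Finset.card_lt_card
  exact ⟨subtree_subset_of_child T h, fun hsub =>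
    parent_not_mem_subtree T h (hsub (self_mem_subtree T v))⟩

lemma disjoint_children_aux {c₁ c₂ v x : V} (h₁ : T.isChild c₁ v) (h₂ : T.isChild c₂ v)
    {n m : ℕ} (hnm : n ≤ m) (hn : T.parent^[n] x = c₁) (hm : T.parent^[m] x = c₂) :
    c₁ = c₂ := by
  have : T.parent^[m - n] c₁ = c₂ := by
    rw [← hn, ← Function.iterate_add_apply]
    rw [show m - n + n = m by omega, hm]
  rcases Nat.eq_zero_or_pos (m - n) with h0 | hpos
  · rw [h0] at this; exact this
  · exfalso
    obtain ⟨j, hj⟩ : ∃ j, m - n = j + 1 := ⟨m - n - 1, by omega⟩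
    rw [hj, Function.iterate_succ_apply, h₁.2] at this
    have hcyc : T.parent^[j + 1] v = v := by
      rw [Function.iterate_succ_apply', this, h₂.2]
    have hv : v = T.root := cycle_root T (Nat.succ_pos j) hcyc
    rw [hv, iterate_root] at this
    exact h₂.1 this.symm

lemma disjoint_children {c₁ c₂ v : V} (h₁ : T.isChild c₁ v) (h₂ : T.isChild c₂ v)
    (hne : c₁ ≠ c₂) : Disjoint (T.subtree c₁) (T.subtree c₂) := by
  rw [Finset.disjoint_left]
  intro x hx₁ hx₂
  obtain ⟨n, hn⟩ := (mem_subtree_iff T).1 hx₁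
  obtain ⟨m, hm⟩ := (mem_subtree_iff T).1 hx₂
  rcases le_total n m with h | h
  · exact hne (disjoint_children_aux T h₁ h₂ h hn hm)
  · exact hne (disjoint_children_aux T h₂ h₁ h hm hn).symm

lemma subtree_decomp {x v : V} (hx : x ∈ T.subtree v) :
    x = v ∨ ∃ c, T.isChild c v ∧ x ∈ T.subtree c := by
  obtain ⟨n, hn⟩ := (mem_subtree_iff T).1 hx
  clear hx
  induction n generalizing x with
  | zero => exact Or.inl hn
  | succ k ih =>
      by_cases hc : T.parent^[k] x = v
      · exact ih hc
      · rw [Function.iterate_succ_apply'] at hn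
        set c := T.parent^[k] x with hcdef
        have hcr : c ≠ T.root := by
          intro h
          rw [h, T.root_fixed] at hn
          rw [← hn] at hc
          exact hc h
        exact Or.inr ⟨c, ⟨hcr, hn⟩, (mem_subtree_iff T).2 ⟨k, rfl⟩⟩

lemma subtree_root : T.subtree T.root = Finset.univ := by
  apply Finset.eq_univ_of_forall
  intro x
  exact (mem_subtree_iff T).2 (T.reach x)

end helpers

section sums
variable {V : Type*} [Fintype V] [DecidableEq V] {G : SimpleGraph V}

lemma sum_acqMove {w w' : V → ℕ} (h : AcqMove G w w') :
    ∑ x, w' x = ∑ x, w x := by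
  obtain ⟨u, v, hadj, _, _, heq⟩ := h
  have hne : u ≠ v := hadj.ne
  subst heq
  rw [Finset.sum_update_of_mem (Finset.mem_univ v)]
  rw [Finset.sum_update_of_mem (by simp [hne] : u ∈ Finset.univ \ {v})]
  have : ((Finset.univ \ {v}) \ {u} : Finset V) = Finset.univ \ {u, v} := by
    ext x; simp; tauto
  rw [this]
  have hrw : ∑ x ∈ Finset.univ \ {u, v}, w x + (w u + w v) = ∑ x, w x := by
    rw [← Finset.sum_pair hne]
    exact Finset.sum_sdiff (Finset.subset_univ _)
  omega

lemma sum_acqReach {w w' : V → ℕ} (h : AcqReach G w w') :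
    ∑ x, w' x = ∑ x, w x := by
  induction h with
  | refl => rfl
  | tail _ hmv ih => rw [sum_acqMove hmv, ih]

lemma gather_val {w w' : V → ℕ} (c : V) (S : Finset V) (hc : c ∈ S)
    (hreach : AcqReach G w w') (h1 : ∀ x ∈ S, w x = 1)
    (h0 : ∀ x ∈ S, x ≠ c → w' x = 0) (hout : ∀ x, x ∉ S → w' x = w x) :
    w' c = S.card := by
  have hsum := sum_acqReach hreach
  have e1 : ∑ x ∈ Finset.univ \ S, w' x + ∑ x ∈ S, w' x = ∑ x, w' x :=
    Finset.sum_sdiff (Finset.subset_univ _)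
  have e2 : ∑ x ∈ Finset.univ \ S, w x + ∑ x ∈ S, w x = ∑ x, w x :=
    Finset.sum_sdiff (Finset.subset_univ _)
  have e3 : ∑ x ∈ Finset.univ \ S, w' x = ∑ x ∈ Finset.univ \ S, w x :=
    Finset.sum_congr rfl fun x hx => hout x (Finset.mem_sdiff.1 hx).2
  have e4 : ∑ x ∈ S, w x = S.card := by
    rw [Finset.sum_congr rfl h1]
    simp
  have e5 : ∑ x ∈ S, w' x = w' c := by
    rw [← Finset.add_sum_erase S w' hc]
    have : ∑ x ∈ S.erase c, w' x = 0 :=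
      Finset.sum_eq_zero fun x hx =>
        h0 x (Finset.mem_of_mem_erase hx) (Finset.ne_of_mem_erase hx)
    omega
  omega


end sums

section main
variable {V : Type*} [Fintype V] [DecidableEq V]

lemma adj_child (T : RTree V) {u v : V} (h : T.isChild u v) : T.graph.Adj u v := by
  rw [RTree.graph, SimpleGraph.fromRel_adj]
  exact ⟨child_ne T h, Or.inl ⟨h.1, h.2⟩⟩

lemma gather (T : RTree V) (hcut : T.CutOff) :
    ∀ N, ∀ v : V, (T.subtree v).card ≤ N → ∀ w : V → ℕ, (∀ x ∈ T.subtree v, w x = 1) →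
    ∃ w', AcqReach T.graph w w' ∧ (∀ x ∈ T.subtree v, x ≠ v → w' x = 0) ∧
      (∀ x, x ∉ T.subtree v → w' x = w x) := by
  intro N
  induction N with
  | zero =>
      intro v hv
      have := Finset.card_pos.2 ⟨v, self_mem_subtree T v⟩
      omega
  | succ N ih =>
      intro v hcard w hw
      obtain ⟨l, hnd, hmem, i', hexact, hle⟩ := hcut v
      have hchild : ∀ i (hi : i < l.length), T.isChild l[i] v :=
        fun i hi => (hmem _).1 (List.getElem_mem hi)
      have hcardc : ∀ i (hi : i < l.length), (T.subtree l[i]).card ≤ N := fun i hi =>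
        Nat.lt_succ_iff.1 (lt_of_lt_of_le (subtree_card_lt T (hchild i hi)) hcard)
      have hgei : ∀ i (hi : i < l.length) (hj : i < l.length), True := fun _ _ _ => trivial
      have hinj : ∀ i j (hi : i < l.length) (hj : j < l.length), l[i] = l[j] → i = j := by
        intro i j hi hj hij
        exact (List.Nodup.getElem_inj_iff hnd).1 hij
      have hdisj : ∀ i j (hi : i < l.length) (hj : j < l.length), i ≠ j →
          Disjoint (T.subtree l[i]) (T.subtree l[j]) := fun i j hi hj hne =>
        disjoint_children T (hchild i hi) (hchild j hj)
          (fun he => hne (hinj i j hi hj he))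
      have hvnot : ∀ i (hi : i < l.length), v ∉ T.subtree l[i] :=
        fun i hi => parent_not_mem_subtree T (hchild i hi)
      -- Phase 1: gather each child's subtree at the child.
      have phase1 : ∀ j, j ≤ l.length → ∃ w1, AcqReach T.graph w w1 ∧
          (∀ i (hi : i < l.length), i < j → w1 l[i] = (T.subtree l[i]).card) ∧
          (∀ i (hi : i < l.length), i < j → ∀ x ∈ T.subtree l[i], x ≠ l[i] → w1 x = 0) ∧
          (∀ x, (∀ i (hi : i < l.length), i < j → x ∉ T.subtree l[i]) → w1 x = w x) := by
        intro j
        induction j with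
        | zero =>
            exact fun _ => ⟨w, Relation.ReflTransGen.refl,
              fun i hi h => absurd h (Nat.not_lt_zero i),
              fun i hi h => absurd h (Nat.not_lt_zero i),
              fun x _ => rfl⟩
        | succ j ihj =>
            intro hj1
            have hjlen : j < l.length := hj1
            obtain ⟨w1, hr1, hval, hz, hun⟩ := ihj (Nat.le_of_lt hj1)
            have h1j : ∀ x ∈ T.subtree l[j], w1 x = 1 := by
              intro x hx
              rw [hun x fun i hi hij => fun hxi =>
                (Finset.disjoint_left.1 (hdisj i j hi hjlen (Nat.ne_of_lt hij))) hxi hx]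
              exact hw x (subtree_subset_of_child T (hchild j hjlen) hx)
            obtain ⟨w2, hr2, hz2, hun2⟩ := ih l[j] (hcardc j hjlen) w1 h1j
            have hvalj : w2 l[j] = (T.subtree l[j]).card :=
              gather_val l[j] (T.subtree l[j]) (self_mem_subtree T l[j]) hr2 h1j hz2 hun2
            refine ⟨w2, hr1.trans hr2, ?_, ?_, ?_⟩
            · intro i hi hij
              rcases Nat.lt_succ_iff_lt_or_eq.1 hij with h | h
              · rw [hun2 l[i] fun hmem' => (Finset.disjoint_left.1
                  (hdisj i j hi hjlen (Nat.ne_of_lt h))) (self_mem_subtree T l[i]) hmem']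
                exact hval i hi h
              · subst h; exact hvalj
            · intro i hi hij x hx hxne
              rcases Nat.lt_succ_iff_lt_or_eq.1 hij with h | h
              · rw [hun2 x fun hmem' => (Finset.disjoint_left.1
                  (hdisj i j hi hjlen (Nat.ne_of_lt h))) hx hmem']
                exact hz i hi h x hx hxne
              · subst h; exact hz2 x hx hxne
            · intro x hx
              rw [hun2 x (hx j hjlen (Nat.lt_succ_self j)),
                hun x fun i hi hij => hx i hi (Nat.lt_succ_of_lt hij)]
      obtain ⟨w1, hr1, hval1, hz1, hun1⟩ := phase1 l.length le_rfl
      have hw1v : w1 v = 1 := by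
        rw [hun1 v fun i hi _ => hvnot i hi]
        exact hw v (self_mem_subtree T v)
      -- Phase 2: absorb children into v.
      have phase2 : ∀ j, j ≤ l.length → ∃ w2, AcqReach T.graph w1 w2 ∧
          (∀ i (hi : i < l.length), i < j → w2 l[i] = 0) ∧
          (∀ x, x ≠ v → (∀ i (hi : i < l.length), i < j → x ≠ l[i]) → w2 x = w1 x) ∧
          (j ≤ i' → w2 v = 2 ^ j) ∧ (i' ≤ j → 2 ^ i' ≤ w2 v) := by
        intro j
        induction j with
        | zero =>
            refine fun _ => ⟨w1, Relation.ReflTransGen.refl,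
              fun i hi h => absurd h (Nat.not_lt_zero i),
              fun x _ _ => rfl, fun _ => by simpa using hw1v, fun h0 => ?_⟩
            have : i' = 0 := Nat.le_zero.1 h0
            simp [this, hw1v]
        | succ j ihj =>
            intro hj1
            have hjlen : j < l.length := hj1
            obtain ⟨w2, hr2, hz2, hun2, hvle, hvge⟩ := ihj (Nat.le_of_lt hj1)
            have hljv : l[j] ≠ v := child_ne T (hchild j hjlen)
            have hw2j : w2 l[j] = (T.subtree l[j]).card := by
              rw [hun2 l[j] hljv fun i hi hij => fun he =>
                (Nat.ne_of_lt hij) (hinj j i hjlen hi he).symm]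
              exact hval1 j hjlen hjlen
            have hpos : 0 < w2 l[j] := by
              rw [hw2j]
              exact Finset.card_pos.2 ⟨l[j], self_mem_subtree T l[j]⟩
            have hupper : w2 l[j] ≤ w2 v := by
              rcases Nat.lt_or_ge j i' with h | h
              · rw [hw2j, hexact j hjlen h, hvle (Nat.le_of_lt h)]
              · calc w2 l[j] ≤ 2 ^ i' := hw2j ▸ hle j hjlen h
                  _ ≤ w2 v := hvge h
            set w3 : V → ℕ := Function.update (Function.update w2 l[j] 0) v (w2 v + w2 l[j])
              with hw3
            have hmv : AcqMove T.graph w2 w3 :=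
              ⟨l[j], v, adj_child T (hchild j hjlen), hpos, hupper, rfl⟩
            have hw3v : w3 v = w2 v + w2 l[j] := by simp [hw3]
            have hw3o : ∀ x, x ≠ v → x ≠ l[j] → w3 x = w2 x := by
              intro x hxv hxj
              simp [hw3, Function.update_of_ne hxv, Function.update_of_ne hxj]
            have hw3j : w3 l[j] = 0 := by
              simp [hw3, Function.update_of_ne hljv]
            refine ⟨w3, hr2.tail hmv, ?_, ?_, ?_, ?_⟩
            · intro i hi hij
              rcases Nat.lt_succ_iff_lt_or_eq.1 hij with h | h
              · rw [hw3o l[i] (child_ne T (hchild i hi))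
                  (fun he => (Nat.ne_of_lt h) (hinj i j hi hjlen he))]
                exact hz2 i hi h
              · subst h; exact hw3j
            · intro x hxv hxl
              rw [hw3o x hxv (hxl j hjlen (Nat.lt_succ_self j))]
              exact hun2 x hxv fun i hi hij => hxl i hi (Nat.lt_succ_of_lt hij)
            · intro hji
              rw [hw3v, hw2j, hexact j hjlen (Nat.lt_of_lt_of_le (Nat.lt_succ_self j) hji),
                hvle (Nat.le_of_succ_le hji)]
              ring
            · intro hij
              rcases Nat.lt_or_ge j i' with h | h
              · have : i' = j + 1 := Nat.le_antisymm hij h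
                rw [hw3v, hw2j, hexact j hjlen h, hvle (Nat.le_of_lt h), this]
                ring_nf
                omega
              · rw [hw3v]
                exact le_trans (hvge h) (Nat.le_add_right _ _)
      obtain ⟨w2, hr2, hz2, hun2, _, _⟩ := phase2 l.length le_rfl
      refine ⟨w2, hr1.trans hr2, ?_, ?_⟩
      · intro x hx hxv
        rcases subtree_decomp T hx with h | ⟨c, hc, hxc⟩
        · exact absurd h hxv
        · obtain ⟨i, hi, hci⟩ := List.mem_iff_getElem.1 ((hmem c).2 hc)
          subst hci
          by_cases hxe : x = l[i]
          · subst hxe; exact hz2 i hi hi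
          · have hxl : ∀ k (hk : k < l.length), k < l.length → x ≠ l[k] := by
              intro k hk _ he
              subst he
              by_cases hik : i = k
              · subst hik; exact hxe rfl
              · exact (Finset.disjoint_left.1 (hdisj i k hi hk hik)) hxc
                  (self_mem_subtree T l[k])
            rw [hun2 x hxv hxl]
            exact hz1 i hi hi x hxc hxe
      · intro x hx
        have hxv : x ≠ v := fun he => hx (he ▸ self_mem_subtree T v)
        have hxi : ∀ i (hi : i < l.length), i < l.length → x ≠ l[i] := by
          intro i hi _ he
          exact hx (subtree_subset_of_child T (hchild i hi)
            (by rw [he]; exact self_mem_subtree T l[i]))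
        rw [hun2 x hxv hxi, hun1 x fun i hi _ => fun hmem' =>
          hx (subtree_subset_of_child T (hchild i hi) hmem')]

end main

section top
variable {V : Type*} [Fintype V] [DecidableEq V]

lemma exists_pos_of_reach {G : SimpleGraph V} {w : V → ℕ} [Nonempty V]
    (h : AcqReach G (fun _ => 1) w) : ∃ x, 0 < w x := by
  by_contra hall
  push_neg at hall
  have hz : ∀ x, w x = 0 := fun x => Nat.le_zero.1 (hall x)
  have hsum : ∑ x, w x = Fintype.card V := by
    rw [sum_acqReach h]
    simp
  rw [Finset.sum_eq_zero fun x _ => hz x] at hsum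
  have := Fintype.card_pos (α := V)
  omega

lemma atNum_of_cutOff (T : RTree V) (hcut : T.CutOff) : atNum T.graph = 1 := by
  haveI : Nonempty V := ⟨T.root⟩
  obtain ⟨w', hr, hz, hun⟩ :=
    gather T hcut (T.subtree T.root).card T.root le_rfl (fun _ => 1) (fun _ _ => rfl)
  rw [subtree_root] at hz
  have hz' : ∀ x, x ≠ T.root → w' x = 0 := fun x hx => hz x (Finset.mem_univ x) hx
  have hval : w' T.root = Fintype.card V := by
    have := gather_val (G := T.graph) T.root Finset.univ (Finset.mem_univ _) hr
      (fun _ _ => rfl) (fun x _ h => hz' x h) (fun x hx => absurd (Finset.mem_univ x) hx)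
    rw [this, Finset.card_univ]
  have hpos : 0 < w' T.root := by
    rw [hval]; exact Fintype.card_pos
  have hmax : ¬ ∃ w'', AcqMove T.graph w' w'' := by
    rintro ⟨w'', u, v, hadj, hu, huv, -⟩
    have hune : u ≠ v := hadj.ne
    by_cases h : u = T.root
    · subst h
      rw [hz' v (Ne.symm hune)] at huv
      omega
    · rw [hz' u h] at hu
      omega
  have hres : residualCard w' = 1 := by
    rw [residualCard, Nat.card_eq_one_iff_unique]
    constructor
    · constructor
      rintro ⟨x, hx⟩ ⟨y, hy⟩
      have hxr : x = T.root := by by_contra h; rw [hz' x h] at hx; omega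
      have hyr : y = T.root := by by_contra h; rw [hz' y h] at hy; omega
      subst hxr; subst hyr; rfl
    · exact ⟨⟨T.root, hpos⟩⟩
  rw [atNum]
  apply le_antisymm
  · exact Nat.sInf_le (Set.mem_setOf.2 ⟨w', hr, hmax, hres⟩)
  · apply le_csInf ⟨1, Set.mem_setOf.2 ⟨w', hr, hmax, hres⟩⟩
    rintro k ⟨w, hw1, -, rfl⟩
    rw [residualCard]
    obtain ⟨x, hx⟩ := exists_pos_of_reach hw1
    haveI : Nonempty {v // 0 < w v} := ⟨⟨x, hx⟩⟩
    exact Nat.one_le_iff_ne_zero.2 Nat.card_pos.ne'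

end top

/-- Let `T''` be a rooted tree obtained from a tree `T` with the cut-off property by
attaching at most one new leaf (the elements of `L`) to each of a set of chosen vertices,
where each chosen vertex is a leaf of `T` (so its `T''`-subtree is exactly itself plus
its new leaf) and the cut-off witnesses of `T` remain valid after the additions (the
exact children's subtrees are unchanged and the non-exact children's enlarged subtrees
still have size at most `2^{i'}`).  Then `T''` has the cut-off property, and hence
`a_t(T'') = 1`. -/
theorem stmt17 {V : Type*} [Fintype V] [DecidableEq V] (T'' : RTree V) (L : Finset V)
    (hleaf : ∀ l ∈ L, T''.IsLeaf l)
    (hroot : T''.root ∉ L)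
    (hpar : ∀ l ∈ L, T''.parent l ∉ L)
    (hdist : ∀ l ∈ L, ∀ l' ∈ L, T''.parent l = T''.parent l' → l = l')
    (hsize2 : ∀ l ∈ L, T''.subtree (T''.parent l) = {T''.parent l, l})
    (hcut : ∀ v : V, v ∉ L → ∃ lst : List V, lst.Nodup ∧
      (∀ u, u ∈ lst ↔ (T''.isChild u v ∧ u ∉ L)) ∧
      ∃ i' : ℕ,
        ((∀ (idx : ℕ) (h : idx < lst.length), idx < i' →
          (T''.subtree lst[idx]).card = 2 ^ idx ∧ ∀ l ∈ L, l ∉ T''.subtree lst[idx]) ∧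
        (∀ (idx : ℕ) (h : idx < lst.length), i' ≤ idx →
          (T''.subtree lst[idx]).card ≤ 2 ^ i'))) :
    T''.CutOff ∧ atNum T''.graph = 1 := by
  have hsub1 : ∀ l ∈ L, T''.subtree l = {l} := by
    intro l hl
    have hlr : l ≠ T''.root := fun h => hroot (h ▸ hl)
    have hch : T''.isChild l (T''.parent l) := ⟨hlr, rfl⟩
    apply Finset.Subset.antisymm
    · intro x hx
      have hx2 : x ∈ T''.subtree (T''.parent l) := subtree_subset_of_child T'' hch hx
      rw [hsize2 l hl] at hx2
      rcases Finset.mem_insert.1 hx2 with h | h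
      · exfalso
        apply parent_not_mem_subtree T'' hch
        rw [← h]
        exact hx
      · exact h
    · simp [self_mem_subtree]
  have hcutoff : T''.CutOff := by
    intro v
    by_cases hvL : v ∈ L
    · refine ⟨[], List.nodup_nil, ?_, 0, ?_, ?_⟩
      · intro u
        simp only [List.not_mem_nil, false_iff]
        intro hc
        exact hleaf v hvL ⟨u, hc⟩
      · intro i h
        simp at h
      · intro i h
        simp at h
    · obtain ⟨lst, hnd, hm, i', hex, hb⟩ := hcut v hvL
      by_cases hex2 : ∃ l ∈ L, T''.parent l = v
      · obtain ⟨l, hlL, hlv⟩ := hex2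
        have hlc : T''.isChild l v := ⟨fun h => hroot (h ▸ hlL), hlv⟩
        have hlnot : l ∉ lst := fun h => ((hm l).1 h).2 hlL
        refine ⟨lst ++ [l], ?_, ?_, min i' lst.length, ?_, ?_⟩
        · rw [List.nodup_append]
          exact ⟨hnd, List.nodup_singleton l, by simpa using fun a (ha : a ∈ lst) (he : a = l) => hlnot (he ▸ ha)⟩
        · intro u
          simp only [List.mem_append, List.mem_singleton]
          constructor
          · rintro (h | rfl)
            · exact ((hm u).1 h).1
            · exact hlc
          · intro hc
            by_cases huL : u ∈ L
            · exact Or.inr (hdist u huL l hlL (hc.2.trans hlv.symm))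
            · exact Or.inl ((hm u).2 ⟨hc, huL⟩)
        · intro idx h hidx
          have h1 : idx < i' := lt_of_lt_of_le hidx (min_le_left _ _)
          have h2 : idx < lst.length := lt_of_lt_of_le hidx (min_le_right _ _)
          rw [List.getElem_append_left h2]
          exact (hex idx h2 h1).1
        · intro idx h hidx
          by_cases hlt : idx < lst.length
          · rw [List.getElem_append_left hlt]
            rcases le_or_gt i' lst.length with hcase | hcase
            · rw [min_eq_left hcase]
              exact hb idx hlt (le_trans (by rw [min_eq_left hcase]) hidx)
            · rw [min_eq_right (le_of_lt hcase)] at hidx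
              omega
          · have hlen : idx = lst.length := by
              have h' := h
              simp only [List.length_append, List.length_singleton] at h'
              omega
            have hel : (lst ++ [l])[idx] = l := by
              subst hlen
              simp
            rw [hel, hsub1 l hlL]
            simpa using Nat.one_le_two_pow
      · refine ⟨lst, hnd, ?_, i', fun i h hi => (hex i h hi).1, hb⟩
        intro u
        rw [hm u]
        constructor
        · exact And.left
        · intro hc
          exact ⟨hc, fun huL => hex2 ⟨u, huL, hc.2⟩⟩
  exact ⟨hcutoff, atNum_of_cutOff T'' hcutoff⟩
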